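/- arXiv:2208.09893 — 3 statements merged into one kernel-verified Lean document; each statement's English description precedes it below -/
import Mathlib

section
/- Let n ≥ 1 be an integer, a, c ∈ ℝ, σ > 0, and let u(y) = a + c·y^{σ+1}/(σ+1). Then for every x > 0 with c²x^{2σ} < 1, setting ν := (1 − c²x^{2σ})^{−1/2}, the model radial mean curvature satisfies the exact identity H[u](x) = −c·x^σ·ν³·( n(1 − c²x^{2σ}) − σ ). -/
/-- The model radial mean curvature operator
`H[u](x) = x^{n+1} · d/dx ( x^{−n} u'(x) / √(1 − u'(x)²) )`, the mean curvature of the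
radial graph `t = u(x)` in the metric `x^{−2}(dx² − dt² + Σ (dy^A)²)`. -/
noncomputable def modelH (n : ℕ) (u : ℝ → ℝ) (x : ℝ) : ℝ :=
  x ^ (n + 1) *
    deriv (fun y : ℝ => y ^ (-(n : ℤ)) * deriv u y / Real.sqrt (1 - (deriv u y) ^ 2)) x

/-- Exact mean curvature of the barrier `u(y) = a + c y^{σ+1}/(σ+1)`:
for `x > 0` with `c²x^{2σ} < 1` and `ν := (1 − c²x^{2σ})^{−1/2}`,
`H[u](x) = −c·x^σ·ν³·(n(1 − c²x^{2σ}) − σ)`. -/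
theorem barrier_mean_curvature (n : ℕ) (hn : 1 ≤ n) (a c σ : ℝ) (hσ : 0 < σ)
    (x : ℝ) (hx : 0 < x) (hc : c ^ 2 * x ^ (2 * σ) < 1) :
    modelH n (fun y => a + c * y ^ (σ + 1) / (σ + 1)) x =
      -c * x ^ σ * (1 / Real.sqrt (1 - c ^ 2 * x ^ (2 * σ))) ^ 3 *
        ((n : ℝ) * (1 - c ^ 2 * x ^ (2 * σ)) - σ) := by
  have hx0 : x ≠ 0 := hx.ne'
  have hσ1 : σ + 1 ≠ 0 := by positivity
  have hdu : ∀ y : ℝ, 0 < y →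
      HasDerivAt (fun y : ℝ => a + c * y ^ (σ + 1) / (σ + 1)) (c * y ^ σ) y := by
    intro y hy
    have h := (((Real.hasDerivAt_rpow_const (x := y) (p := σ + 1)
      (Or.inl hy.ne')).const_mul c).div_const (σ + 1)).const_add a
    refine h.congr_deriv ?_
    rw [add_sub_cancel_right]
    field_simp
  -- x^(2σ) = (x^σ)^2
  have hX2 : x ^ (2 * σ) = (x ^ σ) ^ 2 := by
    rw [two_mul, Real.rpow_add hx, sq]
  have hs : 0 < 1 - (c * x ^ σ) ^ 2 := by
    have : (c * x ^ σ) ^ 2 = c ^ 2 * x ^ (2 * σ) := by rw [mul_pow, hX2]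
    linarith [this ▸ hc]
  have hSpos : 0 < Real.sqrt (1 - (c * x ^ σ) ^ 2) := Real.sqrt_pos.2 hs
  have hS2 : Real.sqrt (1 - (c * x ^ σ) ^ 2) ^ 2 = 1 - (c * x ^ σ) ^ 2 :=
    Real.sq_sqrt hs.le
  -- the inner function eventually equals the explicit one
  have hEq : (fun y : ℝ => y ^ (-(n : ℤ)) *
        deriv (fun y : ℝ => a + c * y ^ (σ + 1) / (σ + 1)) y /
        Real.sqrt (1 - (deriv (fun y : ℝ => a + c * y ^ (σ + 1) / (σ + 1)) y) ^ 2))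
      =ᶠ[nhds x]
      (fun y : ℝ => y ^ (-(n : ℤ)) * (c * y ^ σ) / Real.sqrt (1 - (c * y ^ σ) ^ 2)) := by
    filter_upwards [eventually_gt_nhds hx] with y hy
    rw [(hdu y hy).deriv]
  -- derivative of the explicit function
  have hz := hasDerivAt_zpow (-(n : ℤ)) x (Or.inl hx0)
  have hr : HasDerivAt (fun y : ℝ => c * y ^ σ) (c * (σ * x ^ (σ - 1))) x :=
    (Real.hasDerivAt_rpow_const (Or.inl hx0)).const_mul c
  have hnum := hz.mul hr
  have hq : HasDerivAt (fun y : ℝ => 1 - (c * y ^ σ) ^ 2)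
      (-(2 * (c * x ^ σ) ^ 1 * (c * (σ * x ^ (σ - 1))))) x := by
    simpa using ((hr.pow 2).const_sub 1)
  have hsq := hq.sqrt hs.ne'
  have hG : HasDerivAt (fun y : ℝ => y ^ (-(n : ℤ)) * (c * y ^ σ) / Real.sqrt (1 - (c * y ^ σ) ^ 2))
      (((((-(n : ℤ) : ℤ) : ℝ) * x ^ (-(n : ℤ) - 1) * (c * x ^ σ) + x ^ (-(n : ℤ)) * (c * (σ * x ^ (σ - 1)))) *
        Real.sqrt (1 - (c * x ^ σ) ^ 2) - x ^ (-(n : ℤ)) * (c * x ^ σ) *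
          (-(2 * (c * x ^ σ) ^ 1 * (c * (σ * x ^ (σ - 1)))) / (2 * Real.sqrt (1 - (c * x ^ σ) ^ 2)))) /
        Real.sqrt (1 - (c * x ^ σ) ^ 2) ^ 2) x := hnum.div hsq hSpos.ne'
  rw [modelH, hEq.deriv_eq, hG.deriv]
  -- algebra
  have hσm : x ^ (σ - 1) = x ^ σ / x := by
    rw [Real.rpow_sub hx, Real.rpow_one]
  have hzn : x ^ (-(n : ℤ)) = (x ^ n)⁻¹ := by
    rw [zpow_neg, zpow_natCast]
  have hzn' : x ^ (-(n : ℤ) - 1) = (x ^ n)⁻¹ / x := by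
    rw [zpow_sub₀ hx0, zpow_neg, zpow_natCast, zpow_one]
  have hxn : (x : ℝ) ^ n ≠ 0 := pow_ne_zero _ hx0
  rw [hX2, hσm, hzn, hzn']
  set X : ℝ := x ^ σ with hX
  have hcc : (1 : ℝ) - c ^ 2 * X ^ 2 = 1 - (c * X) ^ 2 := by ring
  rw [hcc]
  set S : ℝ := Real.sqrt (1 - (c * X) ^ 2) with hS
  have hS0 : S ≠ 0 := hSpos.ne'
  rw [div_pow, one_pow, ← hS2]
  field_simp
  push_cast
  linear_combination (x * x ^ n * c * X * σ) * hS2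
end

section
/- Let n ≥ 1 be an integer, a ∈ ℝ, c ≠ 0, σ > 0, x > 0 with c²x^{2σ} < 1 and σ < n(1 − c²x^{2σ}), and let u(y) = a + c·y^{σ+1}/(σ+1). Then the model radial mean curvature H[u](x) is strictly negative if c > 0 and strictly positive if c < 0. In other words, the barrier hypersurfaces S_{a,±} given by the graphs of u_{a,±} = a ± c x^{σ+1}/(σ+1) (with c > 0) satisfy ±H[S_{a,±}] < 0. -/
/-- Sign of the mean curvature of the barriers
`u_{a,±}(y) = a ± c y^{σ+1}/(σ+1)`: if `c²x^{2σ} < 1` and `σ < n(1 − c²x^{2σ})` then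
`H[u](x) < 0` when `c > 0` and `H[u](x) > 0` when `c < 0`, i.e. `±H[S_{a,±}] < 0`. -/
theorem barrier_sign (n : ℕ) (hn : 1 ≤ n) (a c σ : ℝ) (hc : c ≠ 0) (hσ : 0 < σ)
    (x : ℝ) (hx : 0 < x) (hcx : c ^ 2 * x ^ (2 * σ) < 1)
    (hσn : σ < (n : ℝ) * (1 - c ^ 2 * x ^ (2 * σ))) :
    (0 < c → modelH n (fun y => a + c * y ^ (σ + 1) / (σ + 1)) x < 0) ∧
    (c < 0 → 0 < modelH n (fun y => a + c * y ^ (σ + 1) / (σ + 1)) x) := by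
  have hx0 : x ≠ 0 := hx.ne'
  have hσ1 : σ + 1 ≠ 0 := by positivity
  have ht2 : x ^ (2*σ) = (x ^ σ)^2 := by rw [two_mul, Real.rpow_add hx, sq]
  have ht : 0 < x ^ σ := Real.rpow_pos_of_pos hx σ
  have hP : 0 < 1 - (c * x ^ σ)^2 := by rw [mul_pow]; nlinarith [ht2 ▸ hcx]
  have hs : 0 < Real.sqrt (1 - (c * x ^ σ)^2) := Real.sqrt_pos.mpr hP
  have hs2 : Real.sqrt (1 - (c * x ^ σ)^2) ^ 2 = 1 - (c * x ^ σ)^2 := Real.sq_sqrt hP.le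
  -- derivative of u
  have hderiv_u : ∀ y : ℝ, 0 < y →
      deriv (fun y : ℝ => a + c * y ^ (σ + 1) / (σ + 1)) y = c * y ^ σ := by
    intro y hy
    have h : HasDerivAt (fun y : ℝ => a + c * y ^ (σ + 1) / (σ + 1))
        (c * ((σ+1) * y ^ (σ+1-1)) / (σ+1)) y :=
      (((Real.hasDerivAt_rpow_const (x := y) (p := σ+1)
        (Or.inl hy.ne')).const_mul c).div_const (σ+1)).const_add a
    rw [h.deriv, show σ + 1 - 1 = σ by ring]
    field_simp
  -- explicit derivative of the flux
  have hrp : HasDerivAt (fun y : ℝ => y ^ σ) (σ * x ^ (σ-1)) x :=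
    Real.hasDerivAt_rpow_const (Or.inl hx0)
  have hnum := (hasDerivAt_zpow (-(n:ℤ)) x (Or.inl hx0)).mul (hrp.const_mul c)
  have hp := (hasDerivAt_const x (1:ℝ)).sub ((hrp.const_mul c).pow 2)
  have hq := hp.sqrt hP.ne'
  have hG := hnum.div hq hs.ne'
  have heq : (fun y : ℝ => y ^ (-(n:ℤ)) *
        deriv (fun y : ℝ => a + c * y ^ (σ + 1) / (σ + 1)) y /
        Real.sqrt (1 - (deriv (fun y : ℝ => a + c * y ^ (σ + 1) / (σ + 1)) y) ^ 2))
      =ᶠ[nhds x] (fun y : ℝ => y ^ (-(n:ℤ)) * (c * y ^ σ) / Real.sqrt (1 - (c * y ^ σ)^2)) := by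
    filter_upwards [eventually_gt_nhds hx] with y hy
    rw [hderiv_u y hy]
  have hxm1 : x ^ (σ - 1) = x ^ σ / x := by
    rw [Real.rpow_sub hx, Real.rpow_one]
  have hzpow : (x:ℝ) ^ (-(n:ℤ)) = (x ^ n)⁻¹ := by
    rw [zpow_neg, zpow_natCast]
  have hzpow1 : (x:ℝ) ^ (-(n:ℤ)-1) = (x ^ (n+1))⁻¹ := by
    rw [show (-(n:ℤ)-1) = -((n+1 : ℕ) : ℤ) by push_cast; ring, zpow_neg, zpow_natCast]
  have hxn : (0:ℝ) < x ^ n := pow_pos hx n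
  have hxn1 : (0:ℝ) < x ^ (n+1) := pow_pos hx (n+1)
  have hkey : modelH n (fun y => a + c * y ^ (σ + 1) / (σ + 1)) x
      = c * x ^ σ * ((σ - (n:ℝ)) * Real.sqrt (1 - (c * x ^ σ)^2) ^ 2 + σ * c^2 * (x ^ σ)^2)
        / Real.sqrt (1 - (c * x ^ σ)^2) ^ 3 := by
    rw [modelH, heq.deriv_eq, HasDerivAt.deriv (f := fun y : ℝ => y ^ (-(n:ℤ)) * (c * y ^ σ) /
      Real.sqrt (1 - (c * y ^ σ)^2)) hG]
    simp only [Pi.mul_apply, Pi.sub_apply, Pi.pow_apply, Int.cast_neg, Int.cast_natCast]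
    rw [hxm1, hzpow, hzpow1]
    have hsne : Real.sqrt (1 - (c * x ^ σ)^2) ≠ 0 := hs.ne'
    generalize Real.sqrt (1 - (c * x ^ σ)^2) = S at hsne ⊢
    have hxsucc : x ^ (n+1) = x ^ n * x := pow_succ x n
    field_simp
    ring
  have hquad : (σ - (n:ℝ)) * Real.sqrt (1 - (c * x ^ σ)^2) ^ 2 + σ * c^2 * (x ^ σ)^2
      = σ - n * (1 - (c * x ^ σ)^2) := by rw [hs2]; ring
  have hsgn : σ - (n:ℝ) * (1 - (c * x ^ σ)^2) < 0 := by
    have h1 : c ^ 2 * x ^ (2*σ) = (c * x ^ σ)^2 := by rw [mul_pow, ht2]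
    linarith [h1 ▸ hσn]
  constructor
  · intro hcpos
    rw [hkey, hquad]
    exact div_neg_of_neg_of_pos (mul_neg_of_pos_of_neg (by positivity) hsgn) (by positivity)
  · intro hcneg
    rw [hkey, hquad]
    exact div_pos (mul_pos_of_neg_of_neg (mul_neg_of_neg_of_pos hcneg ht) hsgn) (by positivity)
end

section
/- Let n ≥ 1 and ℓ ≥ 1 be integers with ℓ ≠ n, let b ∈ ℝ, and set u(y) = b·y^{ℓ+1}. Then the model radial mean curvature satisfies lim_{x→0⁺} H[u](x)/x^ℓ = −b·(ℓ+1)·(n−ℓ). Consequently, if one requires the graph t = u(x) to have mean curvature matching a prescribed function H₁ = H̊₁·x^ℓ + o(x^ℓ) to leading order at the conformal boundary, the coefficient must be b = −H̊₁ / ((n−ℓ)(ℓ+1)), which is the paper's formula ů^{(ℓ+1)} = −(H̊₁^{(ℓ)} − H̊₀^{(ℓ)}) / ((n−ℓ)(ℓ+1)·α̊) specialized to the exact model where H̊₀^{(ℓ)} = 0 and α̊ = 1. -/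
private lemma alg_key (c J K P Q x s : ℝ) (hx : x ≠ 0) (hP : P ≠ 0) (hQ : Q ≠ 0)
    (hs : s ≠ 0) :
    c * (K + 1 - (J + 1)) / s + c ^ 3 * (K + 1) * (x * Q) ^ 2 / s ^ 3 =
    x * x * P *
      (((-((J + 1) * P) / (x * P) ^ 2 * (c * (x * Q)) + (x * P)⁻¹ * (c * ((K + 1) * Q))) * s -
          (x * P)⁻¹ * (c * (x * Q)) * (-(c ^ 2 * ((2 * K + 2) * (Q * Q * x))) / (2 * s))) / s ^ 2) /
      (x * Q) := by
  field_simp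
  ring

private lemma model_limit (j k : ℕ) (b : ℝ) :
    Filter.Tendsto (fun x : ℝ => modelH (j + 1) (fun y => b * y ^ (k + 1 + 1)) x / x ^ (k + 1))
      (nhdsWithin 0 (Set.Ioi 0))
      (nhds (-b * ((k : ℝ) + 1 + 1) * (((j : ℝ) + 1) - ((k : ℝ) + 1)))) := by
  set c : ℝ := b * ((k : ℝ) + 1 + 1) with hc
  have hderiv : deriv (fun y : ℝ => b * y ^ (k + 1 + 1)) = fun y => c * y ^ (k + 1) := by
    funext y
    rw [((hasDerivAt_pow (k + 1 + 1) y).const_mul b).deriv]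
    push_cast
    ring
  have hfun : (fun y : ℝ => y ^ (-((j + 1 : ℕ) : ℤ)) *
        deriv (fun y : ℝ => b * y ^ (k + 1 + 1)) y /
        Real.sqrt (1 - (deriv (fun y : ℝ => b * y ^ (k + 1 + 1)) y) ^ 2)) =
      fun y : ℝ => (y ^ (j + 1))⁻¹ * (c * y ^ (k + 1)) /
        Real.sqrt (1 - c ^ 2 * y ^ ((k + 1) * 2)) := by
    funext y
    rw [hderiv]
    rw [zpow_neg, zpow_natCast, mul_pow, ← pow_mul]
  set φ : ℝ → ℝ := fun x =>
    c * (((k : ℝ) + 1) - ((j : ℝ) + 1)) / Real.sqrt (1 - c ^ 2 * x ^ ((k + 1) * 2)) +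
      c ^ 3 * ((k : ℝ) + 1) * (x * x ^ k) ^ 2 /
        (Real.sqrt (1 - c ^ 2 * x ^ ((k + 1) * 2))) ^ 3 with hφ
  have hφ0 : φ 0 = -b * ((k : ℝ) + 1 + 1) * (((j : ℝ) + 1 : ℝ) - ((k : ℝ) + 1)) := by
    simp only [hφ]
    norm_num [hc]
    ring
  have hφlim : Filter.Tendsto φ (nhdsWithin 0 (Set.Ioi 0))
      (nhds (-b * ((k : ℝ) + 1 + 1) * (((j : ℝ) + 1 : ℝ) - ((k : ℝ) + 1)))) := by
    rw [← hφ0]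
    have h1 : Continuous fun x : ℝ => Real.sqrt (1 - c ^ 2 * x ^ ((k + 1) * 2)) := by
      fun_prop
    have h2 : Real.sqrt (1 - c ^ 2 * (0 : ℝ) ^ ((k + 1) * 2)) = 1 := by norm_num
    have hφcont : ContinuousAt φ 0 := by
      apply ContinuousAt.add
      · exact continuousAt_const.div h1.continuousAt (by rw [h2]; norm_num)
      · exact ContinuousAt.div (by fun_prop) (by fun_prop) (by rw [h2]; norm_num)
    exact hφcont.continuousWithinAt.tendsto
  refine Filter.Tendsto.congr' ?_ hφlim
  have hsmall : ∀ᶠ x in nhds (0 : ℝ), c ^ 2 * x ^ ((k + 1) * 2) < 1 := by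
    have hcont : ContinuousAt (fun x : ℝ => c ^ 2 * x ^ ((k + 1) * 2)) 0 := by fun_prop
    have h0 : c ^ 2 * (0 : ℝ) ^ ((k + 1) * 2) < 1 := by norm_num
    exact hcont.eventually_lt continuousAt_const h0
  filter_upwards [hsmall.filter_mono nhdsWithin_le_nhds, self_mem_nhdsWithin]
    with x hq1 hx0
  have hx0 : (0 : ℝ) < x := hx0
  have hqpos : (0 : ℝ) < 1 - c ^ 2 * x ^ ((k + 1) * 2) := by linarith
  have hs : (0 : ℝ) < Real.sqrt (1 - c ^ 2 * x ^ ((k + 1) * 2)) := Real.sqrt_pos.2 hqpos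
  -- derivative computation
  have hinv : HasDerivAt (fun y : ℝ => (y ^ (j + 1))⁻¹)
      (-((((j : ℝ) + 1)) * x ^ j) / (x ^ (j + 1)) ^ 2) x := by
    have := (hasDerivAt_pow (j + 1) x).fun_inv (pow_ne_zero _ hx0.ne')
    simpa using this
  have hp : HasDerivAt (fun y : ℝ => c * y ^ (k + 1)) (c * (((k : ℝ) + 1) * x ^ k)) x := by
    have := (hasDerivAt_pow (k + 1) x).const_mul c
    simpa using this
  have hA := hinv.fun_mul hp
  have hqd : HasDerivAt (fun y : ℝ => 1 - c ^ 2 * y ^ ((k + 1) * 2))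
      (-(c ^ 2 * ((2 * (k : ℝ) + 2) * (x ^ k * x ^ k * x)))) x := by
    have : HasDerivAt (fun y : ℝ => 1 - c ^ 2 * y ^ ((k + 1) * 2))
        (-(c ^ 2 * (((k + 1) * 2 : ℕ) * x ^ ((k + 1) * 2 - 1)))) x :=
      ((hasDerivAt_pow ((k + 1) * 2) x).const_mul (c ^ 2)).const_sub 1
    convert this using 2
    have h : (k + 1) * 2 - 1 = k * 2 + 1 := by omega
    rw [h]
    push_cast
    ring
  have hsd := hqd.sqrt hqpos.ne'
  have hF := hA.fun_div hsd hs.ne'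
  have hmodel : modelH (j + 1) (fun y => b * y ^ (k + 1 + 1)) x =
      x ^ (j + 1 + 1) * deriv (fun y : ℝ => (y ^ (j + 1))⁻¹ * (c * y ^ (k + 1)) /
        Real.sqrt (1 - c ^ 2 * y ^ ((k + 1) * 2))) x := by
    rw [modelH, hfun]
  rw [hφ]
  beta_reduce
  rw [hmodel, hF.deriv]
  rw [show x ^ (j + 1 + 1) = x * x * x ^ j from by ring,
      show x ^ (j + 1) = x * x ^ j from by ring,
      show x ^ (k + 1) = x * x ^ k from by ring,
      show x ^ ((k + 1) * 2) = (x * x ^ k) ^ 2 from by ring]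
  have hs2 : Real.sqrt (1 - c ^ 2 * (x * x ^ k) ^ 2) ≠ 0 := by
    rw [show ((x * x ^ k) ^ 2 : ℝ) = x ^ ((k + 1) * 2) from by ring]
    exact hs.ne'
  exact alg_key c (j : ℝ) (k : ℝ) (x ^ j) (x ^ k) x _ hx0.ne'
    (pow_ne_zero _ hx0.ne') (pow_ne_zero _ hx0.ne') hs2

/-- Leading coefficient for prescribed mean curvature of order
`x^ℓ` (`1 ≤ ℓ ≠ n`): for `u(y) = b y^{ℓ+1}`,
`lim_{x→0⁺} H[u](x)/x^ℓ = −b(ℓ+1)(n−ℓ)`; hence matching a prescribed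
`H₁ = H̊₁ x^ℓ + o(x^ℓ)` to leading order forces `b = −H̊₁/((n−ℓ)(ℓ+1))`. -/
theorem prescribed_curvature_coefficient (n ℓ : ℕ) (hn : 1 ≤ n) (hℓ : 1 ≤ ℓ)
    (hℓn : ℓ ≠ n) (b : ℝ) :
    Filter.Tendsto (fun x : ℝ => modelH n (fun y => b * y ^ (ℓ + 1)) x / x ^ ℓ)
      (nhdsWithin 0 (Set.Ioi 0))
      (nhds (-b * ((ℓ : ℝ) + 1) * ((n : ℝ) - (ℓ : ℝ)))) ∧
    ∀ H₁ : ℝ,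
      Filter.Tendsto (fun x : ℝ => modelH n (fun y => b * y ^ (ℓ + 1)) x / x ^ ℓ)
        (nhdsWithin 0 (Set.Ioi 0)) (nhds H₁) →
      b = -H₁ / (((n : ℝ) - (ℓ : ℝ)) * ((ℓ : ℝ) + 1)) := by
  obtain ⟨k, rfl⟩ : ∃ k, ℓ = k + 1 := ⟨ℓ - 1, by omega⟩
  obtain ⟨j, rfl⟩ : ∃ j, n = j + 1 := ⟨n - 1, by omega⟩
  have hmain : Filter.Tendsto
      (fun x : ℝ => modelH (j + 1) (fun y => b * y ^ (k + 1 + 1)) x / x ^ (k + 1))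
      (nhdsWithin 0 (Set.Ioi 0))
      (nhds (-b * (((k + 1 : ℕ) : ℝ) + 1) * (((j + 1 : ℕ) : ℝ) - ((k + 1 : ℕ) : ℝ)))) := by
    have := model_limit j k b
    convert this using 2 <;> push_cast <;> ring
  refine ⟨hmain, fun H₁ hH₁ => ?_⟩
  have huniq : -b * (((k + 1 : ℕ) : ℝ) + 1) * (((j + 1 : ℕ) : ℝ) - ((k + 1 : ℕ) : ℝ)) = H₁ :=
    tendsto_nhds_unique hmain hH₁
  have hjk : ((j + 1 : ℕ) : ℝ) - ((k + 1 : ℕ) : ℝ) ≠ 0 := by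
    have hj : j ≠ k := by omega
    push_cast
    intro h
    exact hj (by exact_mod_cast (by linarith : (j : ℝ) = (k : ℝ)))
  have hℓ1 : (((k + 1 : ℕ) : ℝ) + 1) ≠ 0 := by push_cast; positivity
  rw [← huniq, eq_div_iff (mul_ne_zero hjk hℓ1)]
  ring
end
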